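/- Every finite connected graph G with δ-thin triangles admits an eccentricity (3δ+1)-approximating spanning tree, i.e., a spanning tree T of G such that ecc_G(v) ≤ ecc_T(v) ≤ ecc_G(v) + 3δ + 1 for every vertex v of G. -/

import Mathlib

open SimpleGraph

variable {V : Type*}

/-- Eccentricity of a vertex: the largest distance from `v` to any vertex. -/
noncomputable def ecc [Fintype V] (G : SimpleGraph V) (v : V) : ℕ :=
  Finset.univ.sup fun u => G.dist v u

/-- Radius: the minimum eccentricity. -/
noncomputable def rad [Fintype V] (G : SimpleGraph V) : ℕ :=
  sInf (Set.range (ecc G))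

/-- Diameter: the maximum eccentricity. -/
noncomputable def gdiam [Fintype V] (G : SimpleGraph V) : ℕ :=
  Finset.univ.sup fun v => ecc G v

/-- `G` has δ-thin triangles: for all vertices `x y z`, all geodesics `p1` from `x` to `y`
and `p2` from `x` to `z`, and all vertices `u ∈ p1`, `v ∈ p2` with
`d(x,u) = d(x,v) ≤ (y|z)_x`, one has `d(u,v) ≤ δ`.  The Gromov product condition
`d(x,u) ≤ (y|z)_x = (d(x,y) + d(x,z) - d(y,z))/2` is written additively in `ℕ`. -/
def ThinTriangles (G : SimpleGraph V) (δ : ℝ) : Prop :=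
  ∀ (x y z : V) (p1 : G.Walk x y) (p2 : G.Walk x z),
    p1.length = G.dist x y → p2.length = G.dist x z →
    ∀ u ∈ p1.support, ∀ v ∈ p2.support,
      G.dist x u = G.dist x v →
      2 * G.dist x u + G.dist y z ≤ G.dist x y + G.dist x z →
      (G.dist u v : ℝ) ≤ δ

section Helpers

variable {G : SimpleGraph V}


/-- Split a walk at position `i`. -/
lemma walk_split {x y : V} (p : G.Walk x y) (i : ℕ) (hi : i ≤ p.length) :
    ∃ (q : G.Walk x (p.getVert i)) (r : G.Walk (p.getVert i) y),
      q.length = i ∧ r.length + i = p.length := by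
  induction p generalizing i with
  | nil =>
    have : i = 0 := by simpa using hi
    subst this
    exact ⟨SimpleGraph.Walk.nil.copy rfl (SimpleGraph.Walk.getVert_zero _).symm,
      SimpleGraph.Walk.nil.copy (SimpleGraph.Walk.getVert_zero _).symm rfl, by simp, by simp⟩
  | cons h p ih =>
    rename_i a b d
    cases i with
    | zero =>
      exact ⟨SimpleGraph.Walk.nil.copy rfl (SimpleGraph.Walk.getVert_zero _).symm,
        (SimpleGraph.Walk.cons h p).copy (SimpleGraph.Walk.getVert_zero _).symm rfl,
        by simp, by simp⟩
    | succ i =>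
      obtain ⟨q, r, hq, hr⟩ := ih i (by simpa using hi)
      exact ⟨SimpleGraph.Walk.cons h q, r, by simp [hq], by simp [Walk.getVert_cons_succ]; omega⟩

/-- On a geodesic, the `i`-th vertex is at distance `i` from the start and
`length - i` from the end. -/
lemma geodesic_getVert (hG : G.Connected) {x y : V} (p : G.Walk x y)
    (hp : p.length = G.dist x y) (i : ℕ) (hi : i ≤ p.length) :
    G.dist x (p.getVert i) = i ∧ G.dist (p.getVert i) y + i = G.dist x y := by
  obtain ⟨q, r, hq, hr⟩ := walk_split p i hi
  have h1 : G.dist x (p.getVert i) ≤ i := by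
    have := SimpleGraph.dist_le q
    omega
  have h2 : G.dist (p.getVert i) y + i ≤ p.length := by
    have := SimpleGraph.dist_le r
    omega
  have h3 : G.dist x y ≤ G.dist x (p.getVert i) + G.dist (p.getVert i) y :=
    hG.dist_triangle
  constructor <;> omega

lemma support_get_eq_getVert {x y : V} (p : G.Walk x y) (i : ℕ)
    (h : i < p.support.length) : p.support.get ⟨i, h⟩ = p.getVert i := by
  induction p generalizing i with
  | nil => simp at h; subst h; simp
  | cons hadj p ih =>
    cases i with
    | zero => simp
    | succ i =>
      simp only [Walk.support_cons, List.get_cons_succ, Walk.getVert_cons_succ]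
      exact ih i _

lemma support_getElem_eq_getVert {x y : V} (p : G.Walk x y) (i : ℕ)
    (h : i < p.support.length) : p.support[i] = p.getVert i := by
  induction p generalizing i with
  | nil => simp at h; subst h; simp
  | cons hadj p ih =>
    cases i with
    | zero => simp
    | succ i =>
      simp only [Walk.support_cons, List.getElem_cons_succ, Walk.getVert_cons_succ]
      exact ih i (by simpa [Walk.length_support] using h)

/-- Shortest-path tree rooted at `c`. -/
lemma exists_spt (hG : G.Connected) (c : V) :
    ∃ T : SimpleGraph V, T ≤ G ∧ T.IsTree ∧ ∀ a, T.dist c a = G.dist c a := by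
  classical
  have hpar : ∀ a, ∃ b, a ≠ c → (G.Adj a b ∧ G.dist c b + 1 = G.dist c a) := by
    intro a
    by_cases ha : a = c
    · exact ⟨a, fun h => absurd ha h⟩
    · obtain ⟨p, hp⟩ := hG.exists_walk_length_eq_dist c a
      have hn : 1 ≤ p.length := by
        have := hG.pos_dist_of_ne (Ne.symm ha)
        omega
      refine ⟨p.getVert (p.length - 1), fun _ => ⟨?_, ?_⟩⟩
      · have := p.adj_getVert_succ (i := p.length - 1) (by omega)
        rw [show p.length - 1 + 1 = p.length by omega, p.getVert_length] at this
        exact this.symm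
      · have := (geodesic_getVert hG p hp (p.length - 1) (by omega)).1
        rw [this]
        omega
  choose par hpar using hpar
  have hadj : ∀ a, a ≠ c → G.Adj a (par a) := fun a h => (hpar a h).1
  have hrank : ∀ a, a ≠ c → G.dist c (par a) + 1 = G.dist c a := fun a h => (hpar a h).2
  set T := SimpleGraph.fromRel (fun a b => a ≠ c ∧ par a = b) with hTdef
  have hTadj : ∀ {a b : V}, T.Adj a b ↔ a ≠ b ∧ ((a ≠ c ∧ par a = b) ∨ (b ≠ c ∧ par b = a)) :=
    fun {a b} => SimpleGraph.fromRel_adj _ a b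
  have hle : T ≤ G := by
    intro a b hab
    rw [hTadj] at hab
    rcases hab with ⟨hne, ⟨h1, h2⟩ | ⟨h1, h2⟩⟩
    · exact h2 ▸ hadj a h1
    · exact (h2 ▸ hadj b h1).symm
  have hwalk : ∀ n a, G.dist c a = n → ∃ p : T.Walk a c, p.length = G.dist c a := by
    intro n
    induction n using Nat.strong_induction_on with
    | _ n ih =>
      intro a hn
      by_cases ha : a = c
      · subst ha
        exact ⟨Walk.nil, by simp [SimpleGraph.dist_self]⟩
      · have hr := hrank a ha
        have hAdjT : T.Adj a (par a) := by
          rw [hTadj]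
          exact ⟨fun h => by rw [← h] at hr; omega, Or.inl ⟨ha, rfl⟩⟩
        obtain ⟨p, hp⟩ := ih (G.dist c (par a)) (by omega) (par a) rfl
        exact ⟨Walk.cons hAdjT p, by simp [hp]; omega⟩
  have hTconn : T.Connected := by
    rw [connected_iff]
    refine ⟨fun a b => ?_, hG.nonempty⟩
    obtain ⟨p, _⟩ := hwalk _ a rfl
    obtain ⟨q, _⟩ := hwalk _ b rfl
    exact p.reachable.trans q.reachable.symm
  have hdistT : ∀ a, T.dist c a = G.dist c a := by
    intro a
    apply le_antisymm
    · obtain ⟨p, hp⟩ := hwalk _ a rfl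
      have := SimpleGraph.dist_le p.reverse
      rwa [Walk.length_reverse, hp] at this
    · obtain ⟨p, hp⟩ := hTconn.exists_walk_length_eq_dist c a
      have := SimpleGraph.dist_le (p.mapLe hle)
      rwa [show (p.mapLe hle).length = p.length from by simp [Walk.mapLe], hp] at this
  have hstep : ∀ {a b : V}, T.Adj a b → G.dist c b ≤ G.dist c a → par a = b := by
    intro a b hab hba
    rw [hTadj] at hab
    rcases hab with ⟨hne, ⟨h1, h2⟩ | ⟨h1, h2⟩⟩
    · exact h2
    · have := hrank b h1
      rw [h2] at this
      omega
  have hacyc : T.IsAcyclic := by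
    intro v q hq
    obtain ⟨u, hu, hmaxu⟩ := Finset.exists_max_image q.support.toFinset (fun z => G.dist c z)
      ⟨v, by simp [q.start_mem_support]⟩
    rw [List.mem_toFinset] at hu
    set q' := q.rotate u hu with hq'def
    have hq' : q'.IsCycle := hq.rotate hu
    have hmax : ∀ z ∈ q'.support, G.dist c z ≤ G.dist c u := by
      intro z hz
      rw [Walk.support_eq_cons] at hz
      rcases List.mem_cons.mp hz with rfl | hz
      · exact le_rfl
      · have : z ∈ q.support.tail := (Walk.support_rotate q u hu).perm.mem_iff.mp hz
        have : z ∈ q.support := q.support_eq_cons ▸ List.mem_cons_of_mem _ this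
        exact hmaxu z (List.mem_toFinset.mpr this)
    set n := q'.length with hndef
    have hn3 : 3 ≤ n := hq'.three_le_length
    have hadj1 : T.Adj u (q'.getVert 1) := by
      have := q'.adj_getVert_succ (i := 0) (by omega)
      rwa [q'.getVert_zero] at this
    have hadj2 : T.Adj (q'.getVert (n - 1)) u := by
      have := q'.adj_getVert_succ (i := n - 1) (by omega)
      rwa [show n - 1 + 1 = n by omega, q'.getVert_length] at this
    have hx : q'.getVert 1 ∈ q'.support := Walk.mem_support_iff_exists_getVert.mpr ⟨1, rfl, by omega⟩
    have hy : q'.getVert (n - 1) ∈ q'.support :=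
      Walk.mem_support_iff_exists_getVert.mpr ⟨n - 1, rfl, by omega⟩
    have h1 : par u = q'.getVert 1 := hstep hadj1 (hmax _ hx)
    have h2 : par u = q'.getVert (n - 1) := hstep hadj2.symm (hmax _ hy)
    have hxy : q'.getVert 1 = q'.getVert (n - 1) := h1 ▸ h2
    have hlen : q'.support.length = n + 1 := by rw [Walk.length_support]
    have htl : q'.support.tail.length = n := by
      rw [List.length_tail, hlen]
      omega
    have g1 : q'.support.tail[0]'(by omega) = q'.getVert 1 := by
      have h0 : q'.support[1]'(by omega) = q'.getVert 1 := support_getElem_eq_getVert q' 1 (by omega)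
      rw [← h0]
      rw [← List.getElem_tail]
    have hi1 : n - 1 = (n - 2) + 1 := by omega
    have g2 : q'.support.tail[n-2]'(by omega) = q'.getVert (n - 1) := by
      have h0 : q'.support[(n-2)+1]'(by omega) = q'.getVert ((n-2)+1) :=
        support_getElem_eq_getVert q' ((n-2)+1) (by omega)
      rw [List.getElem_tail, h0, ← hi1]
    have hinj := (hq'.support_nodup.getElem_inj_iff (hi := by omega) (hj := by omega)).mp
      (g1.trans (hxy.trans g2.symm))
    omega
  exact ⟨T, hle, ⟨hTconn, hacyc⟩, hdistT⟩

lemma key_ecc [Fintype V] (hG : G.Connected) (δ : ℝ) (hδ : 0 ≤ δ)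
    (hthin : ThinTriangles G δ) (c : V) (hc : ecc G c = rad G) (v : V) :
    G.dist c v + rad G ≤ ecc G v + 3 * ⌊δ⌋₊ + 1 := by
  haveI : Nonempty V := hG.nonempty
  have hradle : ∀ m : V, rad G ≤ ecc G m := fun m => Nat.sInf_le ⟨m, rfl⟩
  have hecc_le : ∀ a b : V, G.dist a b ≤ ecc G a := fun a b =>
    Finset.le_sup (Finset.mem_univ b)
  set D := ⌊δ⌋₊ with hDdef
  by_cases hsmall : G.dist c v ≤ 3 * D + 1
  · have := hradle v
    omega
  push_neg at hsmall
  obtain ⟨P, hP⟩ := hG.exists_walk_length_eq_dist c v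
  set m := P.getVert (D + 1) with hmdef
  have hm0 := geodesic_getVert hG P hP (D + 1) (by omega)
  have hm1 : G.dist c m = D + 1 := hm0.1
  have hm2 : G.dist m v + (D + 1) = G.dist c v := hm0.2
  clear hm0
  have hmsup : m ∈ P.support := Walk.mem_support_iff_exists_getVert.mpr ⟨D + 1, rfl, by omega⟩
  obtain ⟨w, -, hw⟩ := Finset.exists_mem_eq_sup Finset.univ Finset.univ_nonempty
    (fun u => G.dist m u)
  have hRmw : rad G ≤ G.dist m w := by
    have : ecc G m = G.dist m w := hw
    have := hradle m
    omega
  have hcwR : G.dist c w ≤ rad G := hc ▸ hecc_le c w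
  have hmw_le : G.dist m w ≤ (D + 1) + G.dist c w := by
    have htri : G.dist m w ≤ G.dist m c + G.dist c w := hG.dist_triangle
    have : G.dist m c = D + 1 := by rw [SimpleGraph.dist_comm]; exact hm1
    omega
  have hA : ¬ (2 * (D + 1) + G.dist v w ≤ G.dist c v + G.dist c w) := by
    intro hA
    have hDcw : D + 1 ≤ G.dist c w := by
      have htri : G.dist c v ≤ G.dist c w + G.dist w v := hG.dist_triangle
      have : G.dist w v = G.dist v w := SimpleGraph.dist_comm
      omega
    obtain ⟨Q, hQ⟩ := hG.exists_walk_length_eq_dist c w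
    set m' := Q.getVert (D + 1) with hm'def
    have hm'0 := geodesic_getVert hG Q hQ (D + 1) (by omega)
    have hm'1 : G.dist c m' = D + 1 := hm'0.1
    have hm'2 : G.dist m' w + (D + 1) = G.dist c w := hm'0.2
    clear hm'0
    have hm'sup : m' ∈ Q.support := Walk.mem_support_iff_exists_getVert.mpr ⟨D + 1, rfl, by omega⟩
    have hthin1 := hthin c v w P Q hP hQ m hmsup m' hm'sup (by rw [hm1, hm'1])
      (by rw [hm1]; omega)
    have hD1 : G.dist m m' ≤ D := Nat.le_floor hthin1
    have htri2 : G.dist m w ≤ G.dist m m' + G.dist m' w := hG.dist_triangle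
    omega
  have hA' : G.dist c v + G.dist c w ≤ 2 * D + 1 + G.dist v w := by omega
  have hvw_ecc : G.dist v w ≤ ecc G v := hecc_le v w
  by_cases hB : G.dist c v + G.dist c w ≤ 2 * D + G.dist v w
  · omega
  have hEq : G.dist c v + G.dist c w = 2 * D + 1 + G.dist v w := by omega
  by_cases hC : rad G ≤ G.dist c w + D
  · omega
  have hD2 : G.dist c w + D + 1 ≤ rad G := by omega
  exfalso
  have hsvw : G.dist c v ≤ G.dist v w + D + 1 := by
    have htri : G.dist c v ≤ G.dist c w + G.dist w v := hG.dist_triangle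
    have hcm : G.dist w v = G.dist v w := SimpleGraph.dist_comm
    omega
  set s := G.dist c v - (D + 1) with hsdef
  have hs : s + (D + 1) = G.dist c v := by omega
  have hvm : G.dist v m = s := by
    rw [SimpleGraph.dist_comm]
    omega
  have hmsup' : m ∈ P.reverse.support := by
    rw [Walk.support_reverse]
    exact List.mem_reverse.mpr hmsup
  have hP' : P.reverse.length = G.dist v c := by
    rw [Walk.length_reverse, hP, SimpleGraph.dist_comm]
  obtain ⟨Q', hQ'⟩ := hG.exists_walk_length_eq_dist v w
  set m'' := Q'.getVert s with hm''def
  have hm''0 := geodesic_getVert hG Q' hQ' s (by omega)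
  have hm''1 : G.dist v m'' = s := hm''0.1
  have hm''2 : G.dist m'' w + s = G.dist v w := hm''0.2
  clear hm''0
  have hm''sup : m'' ∈ Q'.support := Walk.mem_support_iff_exists_getVert.mpr ⟨s, rfl, by omega⟩
  have hthin2 := hthin v c w P.reverse Q' hP' hQ' m hmsup' m'' hm''sup
    (by rw [hvm, hm''1])
    (by
      rw [hvm, SimpleGraph.dist_comm (u := v) (v := c)]
      omega)
  have hD3 : G.dist m m'' ≤ D := Nat.le_floor hthin2
  have htri3 : G.dist m w ≤ G.dist m m'' + G.dist m'' w := hG.dist_triangle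
  omega


end Helpers

/-- Every finite connected graph with δ-thin triangles admits an
eccentricity `(3δ+1)`-approximating spanning tree. -/
theorem stmt_12 [Fintype V] (G : SimpleGraph V) (hG : G.Connected)
    (δ : ℝ) (hδ : 0 ≤ δ) (hthin : ThinTriangles G δ) :
    ∃ T : SimpleGraph V, T ≤ G ∧ T.IsTree ∧
      ∀ v : V, ecc G v ≤ ecc T v ∧ (ecc T v : ℝ) ≤ (ecc G v : ℝ) + 3 * δ + 1 := by
  haveI : Nonempty V := hG.nonempty
  obtain ⟨c, hc⟩ := Nat.sInf_mem (Set.range_nonempty (ecc G))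
  have hcR : ecc G c = rad G := hc
  obtain ⟨T, hle, hTree, hTd⟩ := exists_spt hG c
  have hdistle : ∀ a b : V, G.dist a b ≤ T.dist a b := by
    intro a b
    obtain ⟨p, hp⟩ := hTree.isConnected.exists_walk_length_eq_dist a b
    have := SimpleGraph.dist_le (p.mapLe hle)
    rwa [show (p.mapLe hle).length = p.length from by simp [Walk.mapLe], hp] at this
  refine ⟨T, hle, hTree, fun v => ⟨?_, ?_⟩⟩
  · exact Finset.sup_le fun u _ =>
      le_trans (hdistle v u) (Finset.le_sup (Finset.mem_univ u))
  · have h1 : ecc T v ≤ G.dist c v + rad G := by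
      apply Finset.sup_le
      intro u _
      calc T.dist v u ≤ T.dist v c + T.dist c u := hTree.isConnected.dist_triangle
        _ = G.dist c v + G.dist c u := by
            rw [SimpleGraph.dist_comm (u := v) (v := c), hTd, hTd]
        _ ≤ G.dist c v + rad G := by
            have : G.dist c u ≤ rad G := hcR ▸ Finset.le_sup (Finset.mem_univ u)
            omega
    have h2 := key_ecc hG δ hδ hthin c hcR v
    have h3 : ecc T v ≤ ecc G v + 3 * ⌊δ⌋₊ + 1 := by omega
    calc (ecc T v : ℝ) ≤ ((ecc G v + 3 * ⌊δ⌋₊ + 1 : ℕ) : ℝ) := Nat.cast_le.mpr h3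
      _ = (ecc G v : ℝ) + 3 * (⌊δ⌋₊ : ℝ) + 1 := by push_cast; ring
      _ ≤ (ecc G v : ℝ) + 3 * δ + 1 := by
          have := Nat.floor_le hδ
          linarith
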